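/- Suppose f(θ, w) is twice differentiable, μ-strongly convex and L-smooth in θ, with ‖∇²₁₂ f(θ, w)‖ ≤ C₁ and ‖∇_θ w*(θ)‖ ≤ C₂ where C₁C₂ ≤ μ/2. Then the operator F(θ) = ∇₁ f(θ, w*(θ)) has Jacobian ∇_θ F(θ) = ∇²₁₁ f(θ, w*(θ)) + ∇_θ w*(θ) ∇²₁₂ f(θ, w*(θ)) satisfying (μ/2) I ⪯ ∇_θ F(θ) ⪯ 2L · I, hence F is (μ/2)-strongly monotone and (2L)-Lipschitz. -/

import Mathlib

open scoped RealInnerProductSpace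

lemma aux_opNorm_le {E : Type*} [NormedAddCommGroup E] [InnerProductSpace ℝ E]
    (A : E →L[ℝ] E) (L : ℝ) (hL : 0 ≤ L)
    (hsym : ∀ u v, ⟪A u, v⟫ = ⟪u, A v⟫)
    (hb : ∀ v, |⟪A v, v⟫| ≤ L * ‖v‖ ^ 2) : ‖A‖ ≤ L := by
  refine A.opNorm_le_bound hL (fun u => ?_)
  rcases eq_or_ne (A u) 0 with h0 | h0
  · simp [h0]; positivity
  · have hAu : 0 < ‖A u‖ := norm_pos_iff.mpr h0
    set w : E := (‖u‖ / ‖A u‖) • A u with hw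
    have hwnorm : ‖w‖ = ‖u‖ := by
      rw [hw, norm_smul, norm_div, Real.norm_eq_abs, abs_of_nonneg (norm_nonneg u),
        Real.norm_eq_abs, abs_of_pos hAu]
      field_simp
    have hval : ⟪A u, w⟫ = ‖u‖ * ‖A u‖ := by
      rw [hw, real_inner_smul_right, real_inner_self_eq_norm_sq]; field_simp
    have hpol : 4 * ⟪A u, w⟫ = ⟪A (u + w), u + w⟫ - ⟪A (u - w), u - w⟫ := by
      have h1 : ⟪A w, u⟫ = ⟪A u, w⟫ := by rw [hsym w u, real_inner_comm]
      simp only [map_add, map_sub, inner_add_left, inner_add_right, inner_sub_left,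
        inner_sub_right, h1]
      ring
    have hb1 := (abs_le.mp (hb (u + w))).2
    have hb2 := neg_le_of_abs_le (hb (u - w))
    have hpar : ‖u + w‖ ^ 2 + ‖u - w‖ ^ 2 = 2 * (‖u‖ ^ 2 + ‖w‖ ^ 2) := by
      nlinarith [parallelogram_law_with_norm ℝ u w]
    have hsum : L * (‖u + w‖ ^ 2 + ‖u - w‖ ^ 2) = L * (4 * ‖u‖ ^ 2) := by
      rw [hpar, hwnorm]; ring
    have key : ‖u‖ * ‖A u‖ ≤ L * ‖u‖ ^ 2 := by nlinarith [hb1, hb2, hpol, hval, hsum]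
    rcases eq_or_lt_of_le (norm_nonneg u) with hu0 | hu0
    · have : u = 0 := by rwa [eq_comm, norm_eq_zero] at hu0
      simp [this] at h0
    · exact le_of_mul_le_mul_left (by nlinarith [key]) hu0

/-- If f(θ, w) is twice differentiable, μ-strongly convex and L-smooth in θ, with
‖∇²₁₂ f(θ, w*(θ))‖ ≤ C₁ and ‖∇_θ w*(θ)‖ ≤ C₂ where C₁C₂ ≤ μ/2, then
F(θ) = ∇₁ f(θ, w*(θ)) has Jacobian ∇²₁₁ f + ∇_θ w* ∘ ∇²₁₂ f satisfying
(μ/2)I ⪯ ∇F(θ) ⪯ 2L·I, hence F is (μ/2)-strongly monotone and (2L)-Lipschitz. -/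
theorem stmt8 {dθ dw : ℕ} (μ L C₁ C₂ : ℝ)
    (hμ : 0 < μ) (hμL : μ ≤ L) (hC : C₁ * C₂ ≤ μ / 2) (hC₁ : 0 ≤ C₁) (hC₂ : 0 ≤ C₂)
    -- g1 θ w = ∇₁ f(θ, w), the partial gradient of f in its first argument
    (g1 : EuclideanSpace ℝ (Fin dθ) → EuclideanSpace ℝ (Fin dw) → EuclideanSpace ℝ (Fin dθ))
    -- H11 θ w = ∇²₁₁ f(θ, w), H12 θ w = ∇²₁₂ f(θ, w)
    (H11 : EuclideanSpace ℝ (Fin dθ) → EuclideanSpace ℝ (Fin dw) →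
      (EuclideanSpace ℝ (Fin dθ) →L[ℝ] EuclideanSpace ℝ (Fin dθ)))
    (H12 : EuclideanSpace ℝ (Fin dθ) → EuclideanSpace ℝ (Fin dw) →
      (EuclideanSpace ℝ (Fin dw) →L[ℝ] EuclideanSpace ℝ (Fin dθ)))
    (wstar : EuclideanSpace ℝ (Fin dθ) → EuclideanSpace ℝ (Fin dw))
    (J : EuclideanSpace ℝ (Fin dθ) → (EuclideanSpace ℝ (Fin dθ) →L[ℝ] EuclideanSpace ℝ (Fin dw)))
    (hJ : ∀ θ, HasFDerivAt wstar (J θ) θ)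
    (hg1 : ∀ θ w, HasFDerivAt (fun p : EuclideanSpace ℝ (Fin dθ) × EuclideanSpace ℝ (Fin dw) =>
      g1 p.1 p.2) ((H11 θ w).coprod (H12 θ w)) (θ, w))
    (hHsym : ∀ θ u v, ⟪H11 θ (wstar θ) u, v⟫ = ⟪u, H11 θ (wstar θ) v⟫)
    (hstrong : ∀ θ v, ⟪H11 θ (wstar θ) v, v⟫ ≥ μ * ‖v‖ ^ 2)
    (hsmooth : ∀ θ v, ⟪H11 θ (wstar θ) v, v⟫ ≤ L * ‖v‖ ^ 2)
    (hC1 : ∀ θ, ‖H12 θ (wstar θ)‖ ≤ C₁)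
    (hC2 : ∀ θ, ‖J θ‖ ≤ C₂)
    (F : EuclideanSpace ℝ (Fin dθ) → EuclideanSpace ℝ (Fin dθ))
    (hF : ∀ θ, F θ = g1 θ (wstar θ)) :
    (∀ θ, HasFDerivAt F (H11 θ (wstar θ) + (H12 θ (wstar θ)).comp (J θ)) θ) ∧
    (∀ θ v, ⟪(H11 θ (wstar θ) + (H12 θ (wstar θ)).comp (J θ)) v, v⟫ ≥ (μ / 2) * ‖v‖ ^ 2) ∧
    (∀ θ v, ⟪(H11 θ (wstar θ) + (H12 θ (wstar θ)).comp (J θ)) v, v⟫ ≤ 2 * L * ‖v‖ ^ 2) ∧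
    (∀ θ₁ θ₂, ⟪F θ₁ - F θ₂, θ₁ - θ₂⟫ ≥ (μ / 2) * ‖θ₁ - θ₂‖ ^ 2) ∧
    (∀ θ₁ θ₂, ‖F θ₁ - F θ₂‖ ≤ 2 * L * ‖θ₁ - θ₂‖) := by
  set M := fun θ => H11 θ (wstar θ) + (H12 θ (wstar θ)).comp (J θ) with hM
  have hL0 : 0 < L := lt_of_lt_of_le hμ hμL
  -- derivative
  have hFd : ∀ θ, HasFDerivAt F (M θ) θ := by
    intro θ
    have hline : HasFDerivAt (fun t : EuclideanSpace ℝ (Fin dθ) => (t, wstar t))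
        ((ContinuousLinearMap.id ℝ _).prod (J θ)) θ :=
      (hasFDerivAt_id θ).prodMk (hJ θ)
    have hcomp := (hg1 θ (wstar θ)).comp θ hline
    have heq : ((H11 θ (wstar θ)).coprod (H12 θ (wstar θ))).comp
        ((ContinuousLinearMap.id ℝ _).prod (J θ)) = M θ := by
      ext v; simp [hM]
    rw [heq] at hcomp
    have : F = fun t => g1 t (wstar t) := funext hF
    rw [this]
    exact hcomp
  -- cross term bound
  have hcross : ∀ θ (v : EuclideanSpace ℝ (Fin dθ)),
      |⟪(H12 θ (wstar θ)) ((J θ) v), v⟫| ≤ μ / 2 * ‖v‖ ^ 2 := by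
    intro θ v
    calc |⟪(H12 θ (wstar θ)) ((J θ) v), v⟫| ≤ ‖(H12 θ (wstar θ)) ((J θ) v)‖ * ‖v‖ :=
          abs_real_inner_le_norm _ _
      _ ≤ (‖H12 θ (wstar θ)‖ * ‖(J θ) v‖) * ‖v‖ := by
          gcongr; exact (H12 θ (wstar θ)).le_opNorm _
      _ ≤ (C₁ * (C₂ * ‖v‖)) * ‖v‖ := by
          have hJv : ‖(J θ) v‖ ≤ C₂ * ‖v‖ := le_trans ((J θ).le_opNorm v)
            (mul_le_mul_of_nonneg_right (hC2 θ) (norm_nonneg v))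
          exact mul_le_mul_of_nonneg_right
            (mul_le_mul (hC1 θ) hJv (norm_nonneg _) hC₁) (norm_nonneg v)
      _ = (C₁ * C₂) * ‖v‖ ^ 2 := by ring
      _ ≤ μ / 2 * ‖v‖ ^ 2 := mul_le_mul_of_nonneg_right hC (sq_nonneg _)
  have hMform : ∀ θ (v : EuclideanSpace ℝ (Fin dθ)),
      ⟪M θ v, v⟫ = ⟪H11 θ (wstar θ) v, v⟫ + ⟪(H12 θ (wstar θ)) ((J θ) v), v⟫ := by
    intro θ v; simp [hM, inner_add_left]
  have hlow : ∀ θ v, ⟪M θ v, v⟫ ≥ (μ / 2) * ‖v‖ ^ 2 := by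
    intro θ v
    have := hcross θ v
    have h1 := hstrong θ v
    rw [hMform]
    have h2 := neg_le_of_abs_le this
    nlinarith
  have hup : ∀ θ v, ⟪M θ v, v⟫ ≤ 2 * L * ‖v‖ ^ 2 := by
    intro θ v
    have := (abs_le.mp (hcross θ v)).2
    have h1 := hsmooth θ v
    rw [hMform]
    nlinarith [sq_nonneg ‖v‖]
  -- operator norm bound
  have hMnorm : ∀ θ, ‖M θ‖ ≤ 2 * L := by
    intro θ
    have h11 : ‖H11 θ (wstar θ)‖ ≤ L := by
      refine aux_opNorm_le _ L hL0.le (hHsym θ) (fun v => ?_)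
      rw [abs_le]
      constructor
      · have := hstrong θ v
        nlinarith [sq_nonneg ‖v‖]
      · exact hsmooth θ v
    have h12 : ‖(H12 θ (wstar θ)).comp (J θ)‖ ≤ C₁ * C₂ :=
      le_trans ((H12 θ (wstar θ)).opNorm_comp_le (J θ))
        (mul_le_mul (hC1 θ) (hC2 θ) (norm_nonneg _) hC₁)
    calc ‖M θ‖ ≤ ‖H11 θ (wstar θ)‖ + ‖(H12 θ (wstar θ)).comp (J θ)‖ := norm_add_le _ _
      _ ≤ L + C₁ * C₂ := add_le_add h11 h12
      _ ≤ 2 * L := by linarith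
  refine ⟨hFd, hlow, hup, ?_, ?_⟩
  · -- strong monotonicity via 1-d MVT
    intro θ₁ θ₂
    set v := θ₁ - θ₂ with hv
    set c := fun t : ℝ => θ₂ + t • v with hc
    have hcd : ∀ t : ℝ, HasDerivAt c v t := by
      intro t
      have h := ((hasDerivAt_id t).smul_const v).const_add θ₂; rw [one_smul] at h; exact h
    set ψ := fun t : ℝ => ⟪F (c t), v⟫ - μ / 2 * ‖v‖ ^ 2 * t with hψ
    have hψd : ∀ t : ℝ, HasDerivAt ψ (⟪M (c t) v, v⟫ - μ / 2 * ‖v‖ ^ 2) t := by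
      intro t
      have h1 : HasDerivAt (fun t => F (c t)) (M (c t) v) t :=
        (hFd (c t)).comp_hasDerivAt t (hcd t)
      have h2 : HasDerivAt (fun t => ⟪F (c t), v⟫) (⟪M (c t) v, v⟫) t := by
        simpa using h1.inner ℝ (hasDerivAt_const t v)
      have h := h2.sub ((hasDerivAt_id t).const_mul (μ / 2 * ‖v‖ ^ 2)); rw [mul_one] at h; exact h
    have hmono : Monotone ψ := by
      apply monotone_of_deriv_nonneg
      · exact fun t => (hψd t).differentiableAt
      · intro t
        rw [(hψd t).deriv]
        have := hlow (c t) v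
        linarith
    have h01 := hmono (show (0:ℝ) ≤ 1 by norm_num)
    have hc0 : c 0 = θ₂ := by simp [hc]
    have hc1 : c 1 = θ₁ := by simp [hc, hv]
    rw [hψ] at h01
    simp only [hc0, hc1] at h01
    have : ⟪F θ₁, v⟫ - ⟪F θ₂, v⟫ ≥ μ / 2 * ‖v‖ ^ 2 := by linarith
    rw [inner_sub_left]
    linarith
  · -- Lipschitz via MVT on convex univ
    intro θ₁ θ₂
    have := convex_univ.norm_image_sub_le_of_norm_hasFDerivWithin_le
      (f' := M) (fun x _ => (hFd x).hasFDerivWithinAt) (fun x _ => hMnorm x)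
      (Set.mem_univ θ₂) (Set.mem_univ θ₁)
    exact this
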